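/- If every vertex of an n-vertex graph G has degree at least n/2, then G contains a Hamiltonian cycle. -/

import Mathlib

open SimpleGraph Finset List

namespace DiracAux

variable {V : Type*} {G : SimpleGraph V}

lemma getVert_inj {a b : V} {p : G.Walk a b} (hp : p.support.Nodup) :
    ∀ {i j : ℕ}, i ≤ p.length → j ≤ p.length → p.getVert i = p.getVert j → i = j := by
  induction p with
  | nil => intro i j hi hj _; simp only [SimpleGraph.Walk.length_nil, Nat.le_zero] at hi hj; omega
  | cons h q ih =>
    rename_i u w x
    rw [SimpleGraph.Walk.support_cons, List.nodup_cons] at hp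
    intro i j hi hj hij
    match i, j with
    | 0, 0 => rfl
    | 0, j + 1 =>
      exfalso
      apply hp.1
      rw [SimpleGraph.Walk.mem_support_iff_exists_getVert]
      refine ⟨j, ?_, by simpa using hj⟩
      simpa [SimpleGraph.Walk.getVert_cons_succ] using hij.symm
    | i + 1, 0 =>
      exfalso
      apply hp.1
      rw [SimpleGraph.Walk.mem_support_iff_exists_getVert]
      refine ⟨i, ?_, by simpa using hi⟩
      simpa [SimpleGraph.Walk.getVert_cons_succ] using hij
    | i + 1, j + 1 =>
      have := ih hp.2 (i := i) (j := j) (by simpa using hi) (by simpa using hj)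
        (by simpa [SimpleGraph.Walk.getVert_cons_succ] using hij)
      omega

lemma exists_split {a b : V} (p : G.Walk a b) :
    ∀ {i : ℕ}, i < p.length →
    ∃ (c d : V) (q : G.Walk a c) (h : G.Adj c d) (r : G.Walk d b),
      p = q.append (SimpleGraph.Walk.cons h r) ∧ q.length = i ∧
      c = p.getVert i ∧ d = p.getVert (i + 1) := by
  induction p with
  | nil => intro i hi; simp at hi
  | cons hadj q ih =>
    intro i hi
    match i with
    | 0 =>
      exact ⟨_, _, SimpleGraph.Walk.nil, hadj, q, rfl, rfl,
        (SimpleGraph.Walk.getVert_zero _).symm, by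
          rw [SimpleGraph.Walk.getVert_cons_succ, SimpleGraph.Walk.getVert_zero]⟩
    | i + 1 =>
      obtain ⟨c, d, q', h', r', heq, hlen, hc, hd⟩ := ih (by simpa using hi)
      exact ⟨c, d, SimpleGraph.Walk.cons hadj q', h', r',
        by rw [SimpleGraph.Walk.cons_append, ← heq], by simp [hlen],
        by rw [SimpleGraph.Walk.getVert_cons_succ]; exact hc,
        by rw [SimpleGraph.Walk.getVert_cons_succ]; exact hd⟩

lemma eq_getVert_one_of_mem_edges {a b x : V} {p : G.Walk a b} (hp : p.support.Nodup)
    (h : s(a, x) ∈ p.edges) : x = p.getVert 1 := by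
  cases p with
  | nil => simp at h
  | cons hadj q =>
    rename_i w
    rw [SimpleGraph.Walk.support_cons, List.nodup_cons] at hp
    rw [SimpleGraph.Walk.edges_cons, List.mem_cons] at h
    rcases h with h | h
    · have hx : x = w := by
        have := Sym2.eq_iff.mp h
        rcases this with ⟨-, rfl⟩ | ⟨rfl, rfl⟩
        · rfl
        · exact absurd rfl hadj.ne
      rw [hx]
      simp [SimpleGraph.Walk.getVert_cons_succ, SimpleGraph.Walk.getVert_zero]
    · exact absurd (SimpleGraph.Walk.fst_mem_support_of_mem_edges q h) hp.1

lemma exists_crossing {ls : List V} {x y : V} (w : G.Walk x y) (hx : x ∉ ls) (hy : y ∈ ls) :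
    ∃ u v : V, u ∉ ls ∧ v ∈ ls ∧ G.Adj u v := by
  induction w with
  | nil => exact absurd hy hx
  | @cons u z _ h w ih =>
    by_cases hz : z ∈ ls
    · exact ⟨u, z, hx, hz, h⟩
    · exact ih hz hy


variable {V : Type*} {G : SimpleGraph V}

lemma preconn [Fintype V] [DecidableEq V] [DecidableRel G.Adj] (hn : 3 ≤ Fintype.card V)
    (hdeg : ∀ v : V, Fintype.card V ≤ 2 * G.degree v) : G.Preconnected := by
  intro u v
  rcases eq_or_ne u v with rfl | huv
  · exact SimpleGraph.Reachable.refl u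
  by_cases hadj : G.Adj u v
  · exact hadj.reachable
  have key : ∃ w, G.Adj u w ∧ G.Adj v w := by
    by_contra hcon
    push_neg at hcon
    have hdisj : Disjoint (G.neighborFinset u) (G.neighborFinset v) := by
      rw [Finset.disjoint_left]
      intro x hx hx'
      rw [SimpleGraph.mem_neighborFinset] at hx hx'
      exact hcon x hx hx'
    have hsub : G.neighborFinset u ∪ G.neighborFinset v ⊆ (Finset.univ : Finset V) \ {u, v} := by
      intro x hx
      rw [Finset.mem_sdiff, Finset.mem_insert, Finset.mem_singleton]
      refine ⟨Finset.mem_univ x, ?_⟩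
      rw [Finset.mem_union, SimpleGraph.mem_neighborFinset, SimpleGraph.mem_neighborFinset] at hx
      rintro (rfl | rfl)
      · rcases hx with hx | hx
        · exact G.irrefl hx
        · exact hadj (hx.symm)
      · rcases hx with hx | hx
        · exact hadj hx
        · exact G.irrefl hx
    have hcard : (G.neighborFinset u ∪ G.neighborFinset v).card ≤ Fintype.card V - 2 := by
      calc (G.neighborFinset u ∪ G.neighborFinset v).card
          ≤ ((Finset.univ : Finset V) \ {u, v}).card := Finset.card_le_card hsub
        _ = Fintype.card V - 2 := by
            rw [Finset.card_sdiff_of_subset (Finset.subset_univ _), Finset.card_univ,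
              Finset.card_insert_of_notMem (by simpa using huv), Finset.card_singleton]
    rw [Finset.card_union_of_disjoint hdisj] at hcard
    have h1 := hdeg u
    have h2 := hdeg v
    rw [← SimpleGraph.card_neighborFinset_eq_degree] at h1 h2
    omega
  obtain ⟨w, h1, h2⟩ := key
  exact h1.reachable.trans h2.reachable.symm

end DiracAux


open SimpleGraph Finset List
/-- Dirac's theorem: if every vertex of an `n`-vertex graph `G` (with `n ≥ 3`)
has degree at least `n/2`, then `G` contains a Hamiltonian cycle. -/
theorem stmt_1 {V : Type*} [Fintype V] [DecidableEq V] (G : SimpleGraph V)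
    [DecidableRel G.Adj] (hn : 3 ≤ Fintype.card V)
    (hdeg : ∀ v : V, Fintype.card V ≤ 2 * G.degree v) :
    ∃ (v : V) (c : G.Walk v v), c.IsHamiltonianCycle := by
  classical
  have hVne : Nonempty V := Fintype.card_pos_iff.mp (by omega)
  set PS : Set ℕ := {l | ∃ (a b : V) (p : G.Walk a b), p.IsPath ∧ p.length = l} with hPS
  have hne : PS.Nonempty := by
    obtain ⟨v⟩ := hVne
    exact ⟨0, v, v, SimpleGraph.Walk.nil, SimpleGraph.Walk.IsPath.nil, rfl⟩
  have hbdd : BddAbove PS := ⟨Fintype.card V, by rintro l ⟨a, b, p, hp, rfl⟩; exact hp.length_lt.le⟩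
  obtain ⟨a, b, p, hp, hlen⟩ := Nat.sSup_mem hne hbdd
  have hmax : ∀ (x y : V) (q : G.Walk x y), q.IsPath → q.length ≤ p.length := by
    intro x y q hq
    rw [hlen]; exact le_csSup hbdd ⟨x, y, q, hq, rfl⟩
  have hnbra : ∀ x, G.Adj a x → x ∈ p.support := by
    intro x hx
    by_contra hxs
    have hpath : (SimpleGraph.Walk.cons hx.symm p).IsPath := by
      rw [SimpleGraph.Walk.cons_isPath_iff]; exact ⟨hp, hxs⟩
    have := hmax _ _ _ hpath
    simp [SimpleGraph.Walk.length_cons] at this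
  have hnbrb : ∀ x, G.Adj b x → x ∈ p.support := by
    intro x hx
    by_contra hxs
    have hpath : (SimpleGraph.Walk.cons hx.symm p.reverse).IsPath := by
      rw [SimpleGraph.Walk.cons_isPath_iff]
      exact ⟨hp.reverse, by rwa [SimpleGraph.Walk.support_reverse, List.mem_reverse]⟩
    have := hmax _ _ _ hpath
    simp [SimpleGraph.Walk.length_cons, SimpleGraph.Walk.length_reverse] at this
  have hdegle : ∀ (x : V), x ∈ p.support → (∀ y, G.Adj x y → y ∈ p.support) →
      G.degree x ≤ p.length := by
    intro x hxs hnb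
    have hsub : G.neighborFinset x ⊆ p.support.toFinset.erase x := by
      intro y hy
      rw [SimpleGraph.mem_neighborFinset] at hy
      rw [Finset.mem_erase]
      exact ⟨hy.ne', List.mem_toFinset.mpr (hnb y hy)⟩
    have h1 : (p.support.toFinset.erase x).card = p.support.toFinset.card - 1 :=
      Finset.card_erase_of_mem (List.mem_toFinset.mpr hxs)
    have h2 : p.support.toFinset.card = p.length + 1 := by
      rw [List.toFinset_card_of_nodup hp.support_nodup, SimpleGraph.Walk.length_support]
    have h3 := Finset.card_le_card hsub
    rw [← SimpleGraph.card_neighborFinset_eq_degree]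
    omega
  have hdega := hdegle a p.start_mem_support hnbra
  have hdegb := hdegle b p.end_mem_support hnbrb
  have hlen2 : 2 ≤ p.length := by have := hdeg a; omega
  have hlenlt : p.length < Fintype.card V := hp.length_lt
  set A := (Finset.range p.length).filter (fun i => G.Adj a (p.getVert (i + 1))) with hA
  set B := (Finset.range p.length).filter (fun i => G.Adj b (p.getVert i)) with hB
  have hcardA : A.card = G.degree a := by
    rw [← SimpleGraph.card_neighborFinset_eq_degree]
    apply Finset.card_bij (fun i _ => p.getVert (i + 1))
    · intro i hi
      rw [hA, Finset.mem_filter] at hi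
      rw [SimpleGraph.mem_neighborFinset]; exact hi.2
    · intro i hi j hj hij
      rw [hA, Finset.mem_filter, Finset.mem_range] at hi hj
      have := DiracAux.getVert_inj hp.support_nodup (i := i + 1) (j := j + 1)
        (by omega) (by omega) hij
      omega
    · intro x hx
      rw [SimpleGraph.mem_neighborFinset] at hx
      obtain ⟨m, hm, hmle⟩ := SimpleGraph.Walk.mem_support_iff_exists_getVert.mp (hnbra x hx)
      have hm0 : m ≠ 0 := by
        rintro rfl
        rw [SimpleGraph.Walk.getVert_zero] at hm
        exact G.irrefl (hm ▸ hx)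
      obtain ⟨i, rfl⟩ := Nat.exists_eq_succ_of_ne_zero hm0
      exact ⟨i, by rw [hA, Finset.mem_filter, Finset.mem_range]
                   exact ⟨by omega, by rw [hm]; exact hx⟩, hm⟩
  have hcardB : B.card = G.degree b := by
    rw [← SimpleGraph.card_neighborFinset_eq_degree]
    apply Finset.card_bij (fun i _ => p.getVert i)
    · intro i hi
      rw [hB, Finset.mem_filter] at hi
      rw [SimpleGraph.mem_neighborFinset]; exact hi.2
    · intro i hi j hj hij
      rw [hB, Finset.mem_filter, Finset.mem_range] at hi hj
      exact DiracAux.getVert_inj hp.support_nodup (by omega) (by omega) hij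
    · intro x hx
      rw [SimpleGraph.mem_neighborFinset] at hx
      obtain ⟨m, hm, hmle⟩ := SimpleGraph.Walk.mem_support_iff_exists_getVert.mp (hnbrb x hx)
      have hmlen : m ≠ p.length := by
        rintro rfl
        rw [SimpleGraph.Walk.getVert_length] at hm
        exact G.irrefl (hm ▸ hx)
      exact ⟨m, by rw [hB, Finset.mem_filter, Finset.mem_range]
                   exact ⟨by omega, by rw [hm]; exact hx⟩, hm⟩
  have hAB : (A ∩ B).Nonempty := by
    rw [← Finset.card_pos]
    have hUnion : (A ∪ B).card ≤ p.length := by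
      calc (A ∪ B).card ≤ (Finset.range p.length).card := by
            apply Finset.card_le_card
            rw [hA, hB]
            exact Finset.union_subset (Finset.filter_subset _ _) (Finset.filter_subset _ _)
        _ = p.length := Finset.card_range _
    have hsum := Finset.card_union_add_card_inter A B
    have h1 := hdeg a
    have h2 := hdeg b
    omega
  obtain ⟨i, hiAB⟩ := hAB
  rw [Finset.mem_inter, hA, hB, Finset.mem_filter, Finset.mem_filter, Finset.mem_range] at hiAB
  obtain ⟨⟨hilen, hai⟩, -, hbi⟩ := hiAB
  obtain ⟨c, d, q, hcd, r, heq, hqlen, hc, hd⟩ := DiracAux.exists_split p hilen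
  rw [← hc] at hbi
  rw [← hd] at hai
  set rest : G.Walk d a := r.append (SimpleGraph.Walk.cons hbi q.reverse) with hrest
  set cyc : G.Walk a a := SimpleGraph.Walk.cons hai rest with hcyc_def
  have hsupp_rest : rest.support = r.support ++ q.support.reverse := by
    rw [hrest, SimpleGraph.Walk.support_append, SimpleGraph.Walk.support_cons, List.tail_cons,
      SimpleGraph.Walk.support_reverse]
  have hsupp_p : p.support = q.support ++ r.support := by
    rw [heq, SimpleGraph.Walk.support_append, SimpleGraph.Walk.support_cons, List.tail_cons]
  have hsupp_perm : rest.support.Perm p.support := by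
    rw [hsupp_rest, hsupp_p]
    calc r.support ++ q.support.reverse
        ~ r.support ++ q.support := List.Perm.append_left _ (List.reverse_perm _)
      _ ~ q.support ++ r.support := List.perm_append_comm
  have hrest_nodup : rest.support.Nodup := hsupp_perm.nodup_iff.mpr hp.support_nodup
  have hrest_path : rest.IsPath := SimpleGraph.Walk.IsPath.mk' hrest_nodup
  have hrest_len : rest.length = p.length := by
    have h1 := congrArg SimpleGraph.Walk.length heq
    simp only [SimpleGraph.Walk.length_append, SimpleGraph.Walk.length_cons] at h1
    rw [hrest]
    simp only [SimpleGraph.Walk.length_append, SimpleGraph.Walk.length_cons,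
      SimpleGraph.Walk.length_reverse]
    omega
  have hedge : s(a, d) ∉ rest.edges := by
    intro hmem
    have hmem' : s(a, d) ∈ rest.reverse.edges := by
      rw [SimpleGraph.Walk.edges_reverse, List.mem_reverse]; exact hmem
    have h1 : d = rest.reverse.getVert 1 :=
      DiracAux.eq_getVert_one_of_mem_edges hrest_path.reverse.support_nodup hmem'
    have h2 : rest.reverse.getVert rest.reverse.length = d :=
      SimpleGraph.Walk.getVert_length _
    have h3 : rest.reverse.length = p.length := by
      rw [SimpleGraph.Walk.length_reverse, hrest_len]
    have := DiracAux.getVert_inj hrest_path.reverse.support_nodup (i := 1)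
      (j := rest.reverse.length) (by omega) (by omega) (by rw [← h1, h2])
    omega
  have hcyc : cyc.IsCycle := (SimpleGraph.Walk.cons_isCycle_iff rest hai).mpr ⟨hrest_path, hedge⟩
  have hsupp_cyc_tail : cyc.support.tail = rest.support := by
    rw [hcyc_def, SimpleGraph.Walk.support_cons, List.tail_cons]
  have hall : ∀ x : V, x ∈ p.support := by
    by_contra hcon
    push_neg at hcon
    obtain ⟨x, hx⟩ := hcon
    obtain ⟨w⟩ := DiracAux.preconn hn hdeg x a
    obtain ⟨u, v, hu, hv, huv⟩ := DiracAux.exists_crossing w hx p.start_mem_support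
    have hvc : v ∈ cyc.support := by
      rw [hcyc_def, SimpleGraph.Walk.support_cons]
      exact List.mem_cons_of_mem _ (hsupp_perm.mem_iff.mpr hv)
    set cyc' := cyc.rotate v hvc with hcyc'_def
    have hcyc'C : cyc'.IsCycle := hcyc.rotate (hu := hvc)
    have hnn : ¬ cyc'.Nil := hcyc'C.not_nil
    have hlen_cyc' : cyc'.length = cyc.length := by
      have h1 := congrArg SimpleGraph.Walk.length (cyc.take_spec hvc)
      simp only [SimpleGraph.Walk.length_append] at h1
      rw [hcyc'_def, SimpleGraph.Walk.rotate, SimpleGraph.Walk.length_append]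
      omega
    have htail_supp : cyc'.tail.support = cyc'.support.tail :=
      SimpleGraph.Walk.support_tail_of_not_nil cyc' hnn
    have htail_nodup : cyc'.tail.support.Nodup := by
      rw [htail_supp]; exact hcyc'C.support_nodup
    have hucyc : u ∉ cyc'.tail.support := by
      rw [htail_supp]
      intro hmem
      have hrot := (SimpleGraph.Walk.support_rotate cyc v hvc).perm
      have : u ∈ cyc.support.tail := hrot.mem_iff.mp hmem
      rw [hsupp_cyc_tail] at this
      exact hu (hsupp_perm.mem_iff.mp this)
    have hq'path : (cyc'.tail.concat huv.symm).IsPath := by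
      apply SimpleGraph.Walk.IsPath.mk'
      rw [SimpleGraph.Walk.support_concat, List.nodup_append]
      exact ⟨htail_nodup, List.nodup_singleton u, by
        intro y hy z hy' hyz
        rw [List.mem_singleton] at hy'
        subst hy' hyz
        exact hucyc hy⟩
    have hle := hmax _ _ _ hq'path
    have htl := SimpleGraph.Walk.length_tail_add_one hnn
    rw [SimpleGraph.Walk.length_concat] at hle
    have hclen : cyc.length = rest.length + 1 := by
      rw [hcyc_def, SimpleGraph.Walk.length_cons]
    omega
  refine ⟨a, cyc, ⟨hcyc, ?_⟩⟩
  intro x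
  have hx : x ∈ rest.support := hsupp_perm.mem_iff.mpr (hall x)
  rw [SimpleGraph.Walk.support_tail_of_not_nil cyc hcyc.not_nil, hsupp_cyc_tail]
  exact List.count_eq_one_of_mem hrest_nodup hx
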